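/- Let k be a field, A a k-algebra, and V₀, V₁, V₂ k-vector spaces. Suppose there is an exact sequence of A-bimodules 0 → A⊗_k V₂⊗_k A → A⊗_k V₁⊗_k A → A⊗_k V₀⊗_k A → A → 0 (where the bimodule structure on A⊗V⊗A is by outer multiplication). Then every left A-module M admits a projective resolution of length at most 2, obtained by applying −⊗_A M to the sequence; in particular the left global dimension of A is at most 2. -/

import Mathlib

set_option linter.unusedSectionVars false
open scoped TensorProduct

namespace BimodAux

variable {k A : Type} [Field k] [Ring A] [Algebra k A]

/-- right multiplication, linear in the multiplier -/
def mulRightL : A →ₗ[k] A →ₗ[k] A where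
  toFun b := LinearMap.mulRight k b
  map_add' b c := by ext x; simp [mul_add]
  map_smul' c b := by ext x; simp [mul_smul_comm]

section V
variable (V : Type) [AddCommGroup V] [Module k V]

/-- the outer right action of `A` on `A ⊗ V ⊗ A` -/
noncomputable def rop (b : A) : (A ⊗[k] (V ⊗[k] A)) →ₗ[k] (A ⊗[k] (V ⊗[k] A)) :=
  LinearMap.lTensor A (LinearMap.lTensor V (LinearMap.mulRight k b))

@[simp] lemma rop_tmul (b a : A) (v : V) (c : A) :
    rop V b (a ⊗ₜ[k] (v ⊗ₜ[k] c)) = a ⊗ₜ[k] (v ⊗ₜ[k] (c * b)) := rfl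

lemma rop_rop (b c : A) (x : A ⊗[k] (V ⊗[k] A)) :
    rop V b (rop V c x) = rop V (c * b) x := by
  induction x using TensorProduct.induction_on with
  | zero => simp
  | tmul a y =>
    induction y using TensorProduct.induction_on with
    | zero => simp
    | tmul v d => simp [mul_assoc]
    | add y₁ y₂ h₁ h₂ => simp_all [TensorProduct.tmul_add]
  | add x₁ x₂ h₁ h₂ => simp_all

@[simp] lemma rop_one (x : A ⊗[k] (V ⊗[k] A)) : rop V 1 x = x := by
  induction x using TensorProduct.induction_on with
  | zero => simp
  | tmul a y =>
    induction y using TensorProduct.induction_on with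
    | zero => simp
    | tmul v d => simp
    | add y₁ y₂ h₁ h₂ => simp_all [TensorProduct.tmul_add]
  | add x₁ x₂ h₁ h₂ => simp_all

lemma smul_def' (a : A) (x : A ⊗[k] (V ⊗[k] A)) :
    a • x = LinearMap.rTensor (V ⊗[k] A) (LinearMap.mulLeft k a) x := by
  induction x using TensorProduct.induction_on with
  | zero => simp
  | tmul c y => rw [TensorProduct.smul_tmul']; simp [smul_eq_mul]
  | add x₁ x₂ h₁ h₂ => rw [smul_add, map_add, h₁, h₂]

end V

end BimodAux

namespace BimodAux

variable {k A : Type} [Field k] [Ring A] [Algebra k A]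
variable {M : Type} [AddCommGroup M] [Module k M] [Module A M]
  [IsScalarTower k A M] [SMulCommClass k A M]

/-- scalar action as a `k`-bilinear map -/
def actM : A →ₗ[k] M →ₗ[k] M where
  toFun b :=
    { toFun := fun m => b • m
      map_add' := fun m n => smul_add b m n
      map_smul' := fun c m => (smul_comm c b m).symm }
  map_add' b c := by ext m; simp [add_smul]
  map_smul' c b := by ext m; simp [smul_assoc]

noncomputable def actT : A ⊗[k] M →ₗ[k] M := TensorProduct.lift actM

@[simp] lemma actT_tmul (b : A) (m : M) : actT (b ⊗ₜ[k] m) = b • m := rfl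

section V
variable (V : Type) [AddCommGroup V] [Module k V]

noncomputable def eta : (A ⊗[k] (V ⊗[k] A)) ⊗[k] M →ₗ[k] A ⊗[k] (V ⊗[k] M) :=
  (LinearMap.lTensor A (LinearMap.lTensor V (actT (M := M)))) ∘ₗ
    (LinearMap.lTensor A (TensorProduct.assoc k V A M).toLinearMap) ∘ₗ
    (TensorProduct.assoc k A (V ⊗[k] A) M).toLinearMap

@[simp] lemma eta_tmul (a : A) (v : V) (b : A) (m : M) :
    eta V ((a ⊗ₜ[k] (v ⊗ₜ[k] b)) ⊗ₜ[k] m) = a ⊗ₜ[k] (v ⊗ₜ[k] (b • m)) := rfl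

noncomputable def sig : A ⊗[k] (V ⊗[k] M) →ₗ[k] (A ⊗[k] (V ⊗[k] A)) ⊗[k] M :=
  (TensorProduct.assoc k A (V ⊗[k] A) M).symm.toLinearMap ∘ₗ
    (LinearMap.lTensor A (TensorProduct.assoc k V A M).symm.toLinearMap) ∘ₗ
    (LinearMap.lTensor A (LinearMap.lTensor V ((TensorProduct.mk k A M) 1)))

@[simp] lemma sig_tmul (a : A) (v : V) (m : M) :
    sig V (a ⊗ₜ[k] (v ⊗ₜ[k] m)) = (a ⊗ₜ[k] (v ⊗ₜ[k] (1 : A))) ⊗ₜ[k] m := rfl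

@[simp] lemma eta_sig (p : A ⊗[k] (V ⊗[k] M)) : eta V (sig V p) = p := by
  induction p using TensorProduct.induction_on with
  | zero => simp
  | tmul a y =>
    induction y using TensorProduct.induction_on with
    | zero => simp
    | tmul v m => simp
    | add y₁ y₂ h₁ h₂ => simp_all [TensorProduct.tmul_add]
  | add x₁ x₂ h₁ h₂ => simp_all

end V

end BimodAux
namespace BimodAux

variable {k A : Type} [Field k] [Ring A] [Algebra k A]
variable {M : Type} [AddCommGroup M] [Module k M] [Module A M]
  [IsScalarTower k A M] [SMulCommClass k A M]
variable {V W : Type} [AddCommGroup V] [Module k V] [AddCommGroup W] [Module k W]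

lemma eta_bal (b : A) (x : A ⊗[k] (V ⊗[k] A)) (m : M) :
    eta V (rop V b x ⊗ₜ[k] m) = eta V (x ⊗ₜ[k] (b • m)) := by
  induction x using TensorProduct.induction_on with
  | zero => simp
  | tmul a y =>
    induction y using TensorProduct.induction_on with
    | zero => simp
    | tmul v c => simp [mul_smul]
    | add y₁ y₂ h₁ h₂ =>
      simp only [TensorProduct.tmul_add] at *
      simp only [map_add, TensorProduct.add_tmul, h₁, h₂]
  | add x₁ x₂ h₁ h₂ =>
    simp only [map_add, TensorProduct.add_tmul, h₁, h₂]

lemma eta_smul (a : A) (x : A ⊗[k] (V ⊗[k] A)) (m : M) :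
    a • eta V (x ⊗ₜ[k] m) = eta V ((a • x) ⊗ₜ[k] m) := by
  induction x using TensorProduct.induction_on with
  | zero => simp
  | tmul c y =>
    rw [TensorProduct.smul_tmul']
    induction y using TensorProduct.induction_on with
    | zero => simp
    | tmul v d => simp [TensorProduct.smul_tmul', smul_eq_mul]
    | add y₁ y₂ h₁ h₂ =>
      simp only [TensorProduct.tmul_add] at *
      simp only [map_add, TensorProduct.add_tmul, smul_add, h₁, h₂]
  | add x₁ x₂ h₁ h₂ =>
    simp only [map_add, TensorProduct.add_tmul, smul_add, h₁, h₂]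

/-- the map induced on `(- ⊗_A M)` by a right-equivariant map `h` -/
noncomputable def indmap (h : (A ⊗[k] (V ⊗[k] A)) →ₗ[k] (A ⊗[k] (W ⊗[k] A))) :
    A ⊗[k] (V ⊗[k] M) →ₗ[k] A ⊗[k] (W ⊗[k] M) :=
  eta W ∘ₗ h.rTensor M ∘ₗ sig V

lemma indmap_eta (h : (A ⊗[k] (V ⊗[k] A)) →ₗ[k] (A ⊗[k] (W ⊗[k] A)))
    (hr : ∀ b x, h (rop V b x) = rop W b (h x))
    (x : A ⊗[k] (V ⊗[k] A)) (m : M) :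
    indmap h (eta V (x ⊗ₜ[k] m)) = eta W (h x ⊗ₜ[k] m) := by
  induction x using TensorProduct.induction_on with
  | zero => simp [indmap]
  | tmul a y =>
    induction y using TensorProduct.induction_on with
    | zero => simp [indmap]
    | tmul v c =>
      have h1 : (a : A) ⊗ₜ[k] (v ⊗ₜ[k] c) = rop V c (a ⊗ₜ[k] (v ⊗ₜ[k] (1:A))) := by simp
      simp only [indmap, LinearMap.comp_apply, eta_tmul, sig_tmul,
        LinearMap.rTensor_tmul]
      rw [← eta_bal, ← hr, ← h1]
    | add y₁ y₂ h₁ h₂ =>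
      simp only [TensorProduct.tmul_add] at *
      simp only [map_add, TensorProduct.add_tmul, h₁, h₂]
  | add x₁ x₂ h₁ h₂ =>
    simp only [map_add, TensorProduct.add_tmul, h₁, h₂]

/-- the map induced on `(- ⊗_A M)` by a right-equivariant map to `A` -/
noncomputable def ind0 (f : (A ⊗[k] (V ⊗[k] A)) →ₗ[k] A) :
    A ⊗[k] (V ⊗[k] M) →ₗ[k] M :=
  actT ∘ₗ f.rTensor M ∘ₗ sig V

lemma ind0_eta (f : (A ⊗[k] (V ⊗[k] A)) →ₗ[k] A)
    (hr : ∀ b x, f (rop V b x) = f x * b)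
    (x : A ⊗[k] (V ⊗[k] A)) (m : M) :
    ind0 f (eta V (x ⊗ₜ[k] m)) = f x • m := by
  induction x using TensorProduct.induction_on with
  | zero => simp [ind0]
  | tmul a y =>
    induction y using TensorProduct.induction_on with
    | zero => simp [ind0]
    | tmul v c =>
      have h1 : (a : A) ⊗ₜ[k] (v ⊗ₜ[k] c) = rop V c (a ⊗ₜ[k] (v ⊗ₜ[k] (1:A))) := by simp
      simp only [ind0, LinearMap.comp_apply, eta_tmul, sig_tmul,
        LinearMap.rTensor_tmul, actT_tmul]
      rw [h1, hr, mul_smul]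
    | add y₁ y₂ h₁ h₂ =>
      simp only [TensorProduct.tmul_add] at *
      simp only [map_add, TensorProduct.add_tmul, add_smul, h₁, h₂]
  | add x₁ x₂ h₁ h₂ =>
    simp only [map_add, TensorProduct.add_tmul, add_smul, h₁, h₂]

/-- the map induced on `(- ⊗_A M)` by a right-equivariant map from `A` -/
noncomputable def indM (s : A →ₗ[k] (A ⊗[k] (V ⊗[k] A))) :
    M →ₗ[k] A ⊗[k] (V ⊗[k] M) :=
  eta V ∘ₗ s.rTensor M ∘ₗ (TensorProduct.mk k A M 1)

lemma indM_smul (s : A →ₗ[k] (A ⊗[k] (V ⊗[k] A)))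
    (hs : ∀ b, s b = rop V b (s 1)) (b : A) (m : M) :
    indM s (b • m) = eta V (s b ⊗ₜ[k] m) := by
  simp only [indM, LinearMap.comp_apply, TensorProduct.mk_apply,
    LinearMap.rTensor_tmul]
  rw [hs b, eta_bal]

end BimodAux
namespace BimodAux

variable {k A : Type} [Field k] [Ring A] [Algebra k A]
variable {V W : Type} [AddCommGroup V] [Module k V] [AddCommGroup W] [Module k W]

/-- `rop` bundled as a linear map in the multiplier -/
noncomputable def ropL (V : Type) [AddCommGroup V] [Module k V] :
    A →ₗ[k] ((A ⊗[k] (V ⊗[k] A)) →ₗ[k] (A ⊗[k] (V ⊗[k] A))) :=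
  (LinearMap.lTensorHom A) ∘ₗ (LinearMap.lTensorHom V) ∘ₗ (mulRightL (k := k))

@[simp] lemma ropL_apply (b : A) (x : A ⊗[k] (V ⊗[k] A)) :
    ropL V b x = rop V b x := rfl

lemma rop_assoc (c : A) (w : A ⊗[k] V) (d : A) :
    rop V c ((TensorProduct.assoc k A V A) (w ⊗ₜ[k] d)) =
      (TensorProduct.assoc k A V A) (w ⊗ₜ[k] (d * c)) := by
  induction w using TensorProduct.induction_on with
  | zero => simp
  | tmul a v => simp
  | add w₁ w₂ h₁ h₂ => simp_all [TensorProduct.add_tmul]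

lemma lift_exists {U : Type} [AddCommGroup U] [Module k U]
    (f : (A ⊗[k] (U ⊗[k] A)) →ₗ[k] (A ⊗[k] (W ⊗[k] A)))
    (π : (A ⊗[k] (V ⊗[k] A)) →ₗ[k] (A ⊗[k] (W ⊗[k] A)))
    (hf : ∀ b x, f (rop U b x) = rop W b (f x))
    (hπ : ∀ b x, π (rop V b x) = rop W b (π x))
    (hran : ∀ x, π x ∈ LinearMap.range f) :
    ∃ s : (A ⊗[k] (V ⊗[k] A)) →ₗ[k] (A ⊗[k] (U ⊗[k] A)),
      (∀ b x, s (rop V b x) = rop U b (s x)) ∧ ∀ x, f (s x) = π x := by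
  classical
  set aL := (TensorProduct.assoc k A V A) with haL
  let e : Module.Basis (Module.Free.ChooseBasisIndex k (A ⊗[k] V)) k (A ⊗[k] V) :=
    Module.Free.chooseBasis k (A ⊗[k] V)
  have hy : ∀ i, ∃ y, f y = π (aL (e i ⊗ₜ[k] (1 : A))) := fun i => hran _
  choose y hyy using hy
  let ℓ : (A ⊗[k] V) →ₗ[k] (A →ₗ[k] (A ⊗[k] (U ⊗[k] A))) :=
    e.constr k (fun i => (ropL U).flip (y i))
  let s : (A ⊗[k] (V ⊗[k] A)) →ₗ[k] (A ⊗[k] (U ⊗[k] A)) :=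
    (TensorProduct.lift ℓ) ∘ₗ aL.symm.toLinearMap
  have hs_basis : ∀ i (c : A), s (aL (e i ⊗ₜ[k] c)) = rop U c (y i) := by
    intro i c
    simp only [s, LinearMap.comp_apply, LinearEquiv.coe_toLinearMap,
      LinearEquiv.symm_apply_apply, TensorProduct.lift.tmul]
    rw [Module.Basis.constr_basis]
    simp
  refine ⟨s, ?_, ?_⟩
  · -- equivariance
    intro b x
    have hx : x = aL (aL.symm x) := (aL.apply_symm_apply x).symm
    rw [hx]
    generalize aL.symm x = z
    have key : ∀ (w : A ⊗[k] V) (c : A),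
        s (rop V b (aL (w ⊗ₜ[k] c))) = rop U b (s (aL (w ⊗ₜ[k] c))) := by
      intro w c
      have hmaps :
          (s ∘ₗ (ropL V b) ∘ₗ aL.toLinearMap ∘ₗ
              ((TensorProduct.mk k (A ⊗[k] V) A).flip c)) =
            ((ropL U b) ∘ₗ s ∘ₗ aL.toLinearMap ∘ₗ
              ((TensorProduct.mk k (A ⊗[k] V) A).flip c)) := by
        apply e.ext
        intro i
        simp only [LinearMap.comp_apply, TensorProduct.mk_apply,
          LinearMap.flip_apply, LinearEquiv.coe_toLinearMap, ropL_apply]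
        rw [rop_assoc, hs_basis, hs_basis, rop_rop]
      have := congrArg (fun g => g w) hmaps
      simpa using this
    induction z using TensorProduct.induction_on with
    | zero => simp
    | tmul w c => exact key w c
    | add z₁ z₂ h₁ h₂ => simp only [map_add, h₁, h₂]
  · -- f ∘ s = π
    intro x
    have hx : x = aL (aL.symm x) := (aL.apply_symm_apply x).symm
    rw [hx]
    generalize aL.symm x = z
    have key : ∀ (w : A ⊗[k] V) (c : A),
        f (s (aL (w ⊗ₜ[k] c))) = π (aL (w ⊗ₜ[k] c)) := by
      intro w c
      have hmaps :
          (f ∘ₗ s ∘ₗ aL.toLinearMap ∘ₗ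
              ((TensorProduct.mk k (A ⊗[k] V) A).flip c)) =
            (π ∘ₗ aL.toLinearMap ∘ₗ
              ((TensorProduct.mk k (A ⊗[k] V) A).flip c)) := by
        apply e.ext
        intro i
        simp only [LinearMap.comp_apply, TensorProduct.mk_apply,
          LinearMap.flip_apply, LinearEquiv.coe_toLinearMap]
        rw [hs_basis, hf, hyy]
        rw [← hπ]
        rw [rop_assoc, one_mul]
      have := congrArg (fun g => g w) hmaps
      simpa using this
    induction z using TensorProduct.induction_on with
    | zero => simp
    | tmul w c => exact key w c
    | add z₁ z₂ h₁ h₂ => simp only [map_add, h₁, h₂]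

end BimodAux
namespace BimodAux

variable {k A : Type} [Field k] [Ring A] [Algebra k A]
variable {M : Type} [AddCommGroup M] [Module k M] [Module A M]
  [IsScalarTower k A M] [SMulCommClass k A M]
variable {V W : Type} [AddCommGroup V] [Module k V] [AddCommGroup W] [Module k W]

lemma indmap_smul (h : (A ⊗[k] (V ⊗[k] A)) →ₗ[k] (A ⊗[k] (W ⊗[k] A)))
    (hl : ∀ (a : A) x, h (a • x) = a • h x)
    (hr : ∀ b x, h (rop V b x) = rop W b (h x))
    (a : A) (p : A ⊗[k] (V ⊗[k] M)) :
    indmap (M := M) h (a • p) = a • indmap (M := M) h p := by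
  rw [← eta_sig V p]
  generalize sig V p = y
  induction y using TensorProduct.induction_on with
  | zero => simp
  | tmul x m =>
    rw [eta_smul, indmap_eta h hr, indmap_eta h hr, hl, ← eta_smul]
  | add y₁ y₂ h₁ h₂ =>
    simp only [map_add, smul_add, h₁, h₂]

lemma ind0_smul (f : (A ⊗[k] (V ⊗[k] A)) →ₗ[k] A)
    (hl : ∀ (a : A) x, f (a • x) = a • f x)
    (hr : ∀ b x, f (rop V b x) = f x * b)
    (a : A) (p : A ⊗[k] (V ⊗[k] M)) :
    ind0 (M := M) f (a • p) = a • ind0 (M := M) f p := by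
  rw [← eta_sig V p]
  generalize sig V p = y
  induction y using TensorProduct.induction_on with
  | zero => simp
  | tmul x m =>
    rw [eta_smul, ind0_eta f hr, ind0_eta f hr, hl, smul_eq_mul, mul_smul]
  | add y₁ y₂ h₁ h₂ =>
    simp only [map_add, smul_add, h₁, h₂]

end BimodAux


open BimodAux

/-- If `A` admits an exact sequence of `A`-bimodules
`0 → A⊗V₂⊗A → A⊗V₁⊗A → A⊗V₀⊗A → A → 0` (bimodule maps expressed as `k`-linear
maps commuting with the outer left and right `A`-actions), then every left
`A`-module admits a projective resolution of length at most 2; in particular the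
left global dimension of `A` is at most 2. -/
theorem bimodule_resolution_implies_global_dimension_le_two
    {k A V₀ V₁ V₂ : Type} [Field k] [Ring A] [Algebra k A]
    [AddCommGroup V₀] [Module k V₀] [AddCommGroup V₁] [Module k V₁]
    [AddCommGroup V₂] [Module k V₂]
    (f₂ : (A ⊗[k] (V₂ ⊗[k] A)) →ₗ[k] (A ⊗[k] (V₁ ⊗[k] A)))
    (f₁ : (A ⊗[k] (V₁ ⊗[k] A)) →ₗ[k] (A ⊗[k] (V₀ ⊗[k] A)))
    (f₀ : (A ⊗[k] (V₀ ⊗[k] A)) →ₗ[k] A)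
    (hleft₂ : ∀ (a : A) x, f₂ (a • x) = a • f₂ x)
    (hleft₁ : ∀ (a : A) x, f₁ (a • x) = a • f₁ x)
    (hleft₀ : ∀ (a : A) x, f₀ (a • x) = a • f₀ x)
    (hright₂ : ∀ (b : A) x,
      f₂ (LinearMap.lTensor A (LinearMap.lTensor V₂ (LinearMap.mulRight k b)) x) =
        LinearMap.lTensor A (LinearMap.lTensor V₁ (LinearMap.mulRight k b)) (f₂ x))
    (hright₁ : ∀ (b : A) x,
      f₁ (LinearMap.lTensor A (LinearMap.lTensor V₁ (LinearMap.mulRight k b)) x) =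
        LinearMap.lTensor A (LinearMap.lTensor V₀ (LinearMap.mulRight k b)) (f₁ x))
    (hright₀ : ∀ (b : A) x,
      f₀ (LinearMap.lTensor A (LinearMap.lTensor V₀ (LinearMap.mulRight k b)) x) =
        f₀ x * b)
    (hinj : Function.Injective f₂)
    (hex₁ : LinearMap.range f₂ = LinearMap.ker f₁)
    (hex₀ : LinearMap.range f₁ = LinearMap.ker f₀)
    (hsurj : Function.Surjective f₀) :
    ∀ (M : Type) (_ : AddCommGroup M) (_ : Module A M),
      ∃ (P₂ P₁ P₀ : Type) (_ : AddCommGroup P₂) (_ : AddCommGroup P₁)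
        (_ : AddCommGroup P₀) (_ : Module A P₂) (_ : Module A P₁) (_ : Module A P₀)
        (g₂ : P₂ →ₗ[A] P₁) (g₁ : P₁ →ₗ[A] P₀) (g₀ : P₀ →ₗ[A] M),
        Module.Projective A P₂ ∧ Module.Projective A P₁ ∧ Module.Projective A P₀ ∧
        Function.Injective g₂ ∧ LinearMap.range g₂ = LinearMap.ker g₁ ∧
        LinearMap.range g₁ = LinearMap.ker g₀ ∧ Function.Surjective g₀ := by
  intro M _ _
  classical
  letI : Module k M := Module.compHom M (algebraMap k A)
  have hks : ∀ (c : k) (m : M), c • m = algebraMap k A c • m := fun _ _ => rfl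
  haveI : IsScalarTower k A M :=
    ⟨fun c a m => by rw [hks, Algebra.smul_def, mul_smul]⟩
  haveI : SMulCommClass k A M :=
    ⟨fun c a m => by
      rw [hks, hks, ← mul_smul, ← mul_smul, Algebra.commutes]⟩
  -- equivariance in `rop` form
  have hr₂ : ∀ b x, f₂ (rop V₂ b x) = rop V₁ b (f₂ x) := hright₂
  have hr₁ : ∀ b x, f₁ (rop V₁ b x) = rop V₀ b (f₁ x) := hright₁
  have hr₀ : ∀ b x, f₀ (rop V₀ b x) = f₀ x * b := hright₀
  -- compositions vanish
  have hf01 : ∀ x, f₀ (f₁ x) = 0 := by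
    intro x
    have : f₁ x ∈ LinearMap.ker f₀ := hex₀ ▸ ⟨x, rfl⟩
    exact this
  have hf12 : ∀ x, f₁ (f₂ x) = 0 := by
    intro x
    have : f₂ x ∈ LinearMap.ker f₁ := hex₁ ▸ ⟨x, rfl⟩
    exact this
  -- the contracting homotopy, right-equivariant
  obtain ⟨p₀, hp₀⟩ := hsurj 1
  set s₀ : A →ₗ[k] (A ⊗[k] (V₀ ⊗[k] A)) := (ropL V₀).flip p₀ with hs₀def
  have hs₀app : ∀ b, s₀ b = rop V₀ b p₀ := fun b => rfl
  have hs₀ : ∀ b, f₀ (s₀ b) = b := by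
    intro b; rw [hs₀app, hr₀, hp₀, one_mul]
  have hs₀e : ∀ b, s₀ b = rop V₀ b (s₀ 1) := by
    intro b; rw [hs₀app, hs₀app, rop_one]
  set π₁ : (A ⊗[k] (V₀ ⊗[k] A)) →ₗ[k] (A ⊗[k] (V₀ ⊗[k] A)) :=
    LinearMap.id - s₀ ∘ₗ f₀ with hπ₁def
  have hπ₁app : ∀ x, π₁ x = x - s₀ (f₀ x) := fun x => rfl
  have hπ₁e : ∀ b x, π₁ (rop V₀ b x) = rop V₀ b (π₁ x) := by
    intro b x
    rw [hπ₁app, hπ₁app, map_sub, hr₀, hs₀app, hs₀app, ← rop_rop, ← hs₀app]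
  have hπ₁ran : ∀ x, π₁ x ∈ LinearMap.range f₁ := by
    intro x
    rw [hex₀, LinearMap.mem_ker, hπ₁app, map_sub, hs₀, sub_self]
  obtain ⟨s₁, hs₁e, hs₁⟩ := lift_exists f₁ π₁ hr₁ hπ₁e hπ₁ran
  set π₂ : (A ⊗[k] (V₁ ⊗[k] A)) →ₗ[k] (A ⊗[k] (V₁ ⊗[k] A)) :=
    LinearMap.id - s₁ ∘ₗ f₁ with hπ₂def
  have hπ₂app : ∀ x, π₂ x = x - s₁ (f₁ x) := fun x => rfl
  have hπ₂e : ∀ b x, π₂ (rop V₁ b x) = rop V₁ b (π₂ x) := by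
    intro b x
    rw [hπ₂app, hπ₂app, map_sub, hr₁, hs₁e]
  have hπ₂ran : ∀ x, π₂ x ∈ LinearMap.range f₂ := by
    intro x
    rw [hex₁, LinearMap.mem_ker, hπ₂app, map_sub, hs₁, hπ₁app, hf01, map_zero,
      sub_zero, sub_self]
  obtain ⟨s₂, hs₂e, hs₂⟩ := lift_exists f₂ π₂ hr₂ hπ₂e hπ₂ran
  -- homotopy identities
  have h4 : ∀ x, s₂ (f₂ x) = x := by
    intro x
    apply hinj
    rw [hs₂, hπ₂app, hf12, map_zero, sub_zero]
  have h3 : ∀ x, s₁ (f₁ x) + f₂ (s₂ x) = x := by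
    intro x; rw [hs₂, hπ₂app]; abel
  have h2 : ∀ x, s₀ (f₀ x) + f₁ (s₁ x) = x := by
    intro x; rw [hs₁, hπ₁app]; abel
  -- the projective resolution
  refine ⟨A ⊗[k] (V₂ ⊗[k] M), A ⊗[k] (V₁ ⊗[k] M), A ⊗[k] (V₀ ⊗[k] M),
    inferInstance, inferInstance, inferInstance,
    inferInstance, inferInstance, inferInstance,
    ⟨(indmap (M := M) f₂).toAddHom, indmap_smul f₂ hleft₂ hr₂⟩,
    ⟨(indmap (M := M) f₁).toAddHom, indmap_smul f₁ hleft₁ hr₁⟩,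
    ⟨(ind0 (M := M) f₀).toAddHom, ind0_smul f₀ hleft₀ hr₀⟩,
    inferInstance, inferInstance, inferInstance, ?_, ?_, ?_, ?_⟩
  · -- injectivity of g₂
    have key : ∀ p, indmap (M := M) s₂ (indmap (M := M) f₂ p) = p := by
      intro p
      rw [← eta_sig V₂ p]
      generalize sig V₂ p = y
      induction y using TensorProduct.induction_on with
      | zero => simp
      | tmul x m => rw [indmap_eta f₂ hr₂, indmap_eta s₂ hs₂e, h4]
      | add y₁ y₂ h₁ h₂ => simp only [map_add, h₁, h₂]
    intro p q hpq
    have := congrArg (indmap (M := M) s₂) hpq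
    simpa [key] using this
  · -- range g₂ = ker g₁
    have key0 : ∀ p, indmap (M := M) f₁ (indmap (M := M) f₂ p) = 0 := by
      intro p
      rw [← eta_sig V₂ p]
      generalize sig V₂ p = y
      induction y using TensorProduct.induction_on with
      | zero => simp
      | tmul x m =>
        rw [indmap_eta f₂ hr₂, indmap_eta f₁ hr₁, hf12,
          TensorProduct.zero_tmul, map_zero]
      | add y₁ y₂ h₁ h₂ => simp only [map_add, h₁, h₂, add_zero]
    have keyh : ∀ p, indmap (M := M) s₁ (indmap (M := M) f₁ p) +
        indmap (M := M) f₂ (indmap (M := M) s₂ p) = p := by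
      intro p
      rw [← eta_sig V₁ p]
      generalize sig V₁ p = y
      induction y using TensorProduct.induction_on with
      | zero => simp
      | tmul x m =>
        rw [indmap_eta f₁ hr₁, indmap_eta s₁ hs₁e, indmap_eta s₂ hs₂e,
          indmap_eta f₂ hr₂, ← map_add, ← TensorProduct.add_tmul, h3]
      | add y₁ y₂ h₁ h₂ =>
        simp only [map_add] at *
        rw [add_add_add_comm, h₁, h₂]
    apply le_antisymm
    · rintro _ ⟨p, rfl⟩
      exact key0 p
    · intro p hp
      replace hp : indmap (M := M) f₁ p = 0 := hp
      exact ⟨indmap (M := M) s₂ p, by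
        have := keyh p
        rwa [hp, map_zero, zero_add] at this⟩
  · -- range g₁ = ker g₀
    have key0 : ∀ p, ind0 (M := M) f₀ (indmap (M := M) f₁ p) = 0 := by
      intro p
      rw [← eta_sig V₁ p]
      generalize sig V₁ p = y
      induction y using TensorProduct.induction_on with
      | zero => simp
      | tmul x m =>
        rw [indmap_eta f₁ hr₁, ind0_eta f₀ hr₀, hf01, zero_smul]
      | add y₁ y₂ h₁ h₂ => simp only [map_add, h₁, h₂, add_zero]
    have keyh : ∀ p, indM (M := M) s₀ (ind0 (M := M) f₀ p) +
        indmap (M := M) f₁ (indmap (M := M) s₁ p) = p := by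
      intro p
      rw [← eta_sig V₀ p]
      generalize sig V₀ p = y
      induction y using TensorProduct.induction_on with
      | zero => simp
      | tmul x m =>
        rw [ind0_eta f₀ hr₀, indM_smul s₀ hs₀e, indmap_eta s₁ hs₁e,
          indmap_eta f₁ hr₁, ← map_add, ← TensorProduct.add_tmul, h2]
      | add y₁ y₂ h₁ h₂ =>
        simp only [map_add] at *
        rw [add_add_add_comm, h₁, h₂]
    apply le_antisymm
    · rintro _ ⟨p, rfl⟩
      exact key0 p
    · intro p hp
      replace hp : ind0 (M := M) f₀ p = 0 := hp
      exact ⟨indmap (M := M) s₁ p, by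
        have := keyh p
        rwa [hp, map_zero, zero_add] at this⟩
  · -- surjectivity of g₀
    intro m
    refine ⟨eta V₀ (p₀ ⊗ₜ[k] m), ?_⟩
    show ind0 (M := M) f₀ (eta V₀ (p₀ ⊗ₜ[k] m)) = m
    rw [ind0_eta f₀ hr₀, hp₀, one_smul]
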